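/- For a two-universal family of hash functions and the associated maps ψ, τ, for all P, Q ∈ ℝ^N with nonnegative entries: ⟨Q, (ψ†∘ψ)(P)⟩ ≤ (1/D)·⟨P,Q⟩ + (1/(|M|·D))·(Σ_j P_j)(Σ_k Q_k). -/

import Mathlib

open Finset

/-- for a two-universal family of hash functions and the associated maps
`ψ(P) = (1/D) Σ_i P_{f_i(N)} ⊗ e_i` and nonnegative `P, Q`:
`⟨Q, (ψ†∘ψ)(P)⟩ = ⟨ψ(Q), ψ(P)⟩ ≤ (1/D)⟨P,Q⟩ + (1/(|M|·D))·(Σ_j P_j)(Σ_k Q_k)`. -/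
theorem two_universal_quadratic_bound
    {N M D : Type} [Fintype N] [DecidableEq N] [Fintype M] [DecidableEq M]
    [Fintype D] [DecidableEq D] [Nonempty N] [Nonempty M] [Nonempty D]
    (f : D → N → M)
    (huniv : ∀ j k : N, j ≠ k →
      (∑ i : D, if f i j = f i k then (1 : ℝ) else 0) / (Fintype.card D)
        ≤ 1 / (Fintype.card M))
    (P Q : N → ℝ) (hP : ∀ x, 0 ≤ P x) (hQ : ∀ x, 0 ≤ Q x) :
    ∑ mi : M × D,
        ((∑ x, if f mi.2 x = mi.1 then Q x else 0) / (Fintype.card D)) *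
        ((∑ x, if f mi.2 x = mi.1 then P x else 0) / (Fintype.card D))
      ≤ (1 / (Fintype.card D)) * ∑ x, P x * Q x
        + (1 / ((Fintype.card M) * (Fintype.card D))) * ((∑ j, P j) * (∑ k, Q k)) := by
  classical
  have hDpos : (0:ℝ) < (Fintype.card D : ℝ) := by exact_mod_cast Fintype.card_pos
  have hMpos : (0:ℝ) < (Fintype.card M : ℝ) := by exact_mod_cast Fintype.card_pos
  set dD : ℝ := (Fintype.card D : ℝ)
  set cM : ℝ := (Fintype.card M : ℝ)
  have key : ∀ i : D,
      (∑ m : M, (∑ x, if f i x = m then Q x else 0) * (∑ y, if f i y = m then P y else 0))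
      = ∑ x, ∑ y, (if f i x = f i y then Q x * P y else 0) := by
    intro i
    simp_rw [Finset.sum_mul_sum]
    rw [Finset.sum_comm]
    refine Finset.sum_congr rfl fun x _ => ?_
    rw [Finset.sum_comm]
    refine Finset.sum_congr rfl fun y _ => ?_
    rw [show (∑ m : M, (if f i x = m then Q x else 0) * (if f i y = m then P y else 0))
        = ∑ m : M, (if f i x = m then (if f i x = f i y then Q x * P y else 0) else 0) from
      Finset.sum_congr rfl fun m _ => by
        by_cases h1 : f i x = m
        · by_cases h2 : f i y = m
          · rw [if_pos h1, if_pos h2, if_pos (h1.trans h2.symm), if_pos h1]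
          · have hne : ¬ f i x = f i y := fun h => h2 (h ▸ h1)
            rw [if_pos h1, if_neg h2, if_neg hne, mul_zero, if_pos h1]
        · rw [if_neg h1, if_neg h1, zero_mul]]
    rw [Finset.sum_ite_eq, if_pos (Finset.mem_univ _)]
  have hstep1 : ∑ mi : M × D,
        ((∑ x, if f mi.2 x = mi.1 then Q x else 0) / dD) *
        ((∑ x, if f mi.2 x = mi.1 then P x else 0) / dD)
      = ∑ x, ∑ y, Q x * P y *
          (∑ i : D, if f i x = f i y then (1:ℝ) else 0) / (dD * dD) := by
    simp_rw [div_mul_div_comm, ← Finset.sum_div]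
    congr 1
    rw [Fintype.sum_prod_type, Finset.sum_comm]
    simp_rw [key]
    rw [Finset.sum_comm]
    refine Finset.sum_congr rfl fun x _ => ?_
    rw [Finset.sum_comm]
    refine Finset.sum_congr rfl fun y _ => ?_
    rw [Finset.mul_sum]
    exact Finset.sum_congr rfl fun i _ => by by_cases h : f i x = f i y <;> simp [h]
  rw [hstep1]
  have hbound : ∀ x y : N,
      Q x * P y * (∑ i : D, if f i x = f i y then (1:ℝ) else 0) / (dD * dD)
      ≤ (if x = y then Q x * P x / dD else 0) + Q x * P y / (cM * dD) := by
    intro x y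
    by_cases hxy : x = y
    · subst hxy
      have hS : (∑ i : D, if f i x = f i x then (1:ℝ) else 0) = dD := by
        simp [dD]
      rw [hS, if_pos rfl]
      have h1 : Q x * P x * dD / (dD * dD) = Q x * P x / dD := by
        field_simp
      rw [h1]
      have : 0 ≤ Q x * P x / (cM * dD) :=
        div_nonneg (mul_nonneg (hQ x) (hP x)) (le_of_lt (mul_pos hMpos hDpos))
      linarith
    · rw [if_neg hxy, zero_add]
      have h2 := huniv x y hxy
      have hQP : 0 ≤ Q x * P y := mul_nonneg (hQ x) (hP y)
      have heq : Q x * P y * (∑ i : D, if f i x = f i y then (1:ℝ) else 0) / (dD*dD)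
           = Q x * P y * ((∑ i : D, if f i x = f i y then (1:ℝ) else 0) / dD) / dD := by
        field_simp
      have hr : Q x * P y * (1/cM) / dD = Q x * P y / (cM * dD) := by
        rw [mul_one_div, div_div]
      rw [heq, ← hr]
      gcongr
  calc ∑ x, ∑ y, Q x * P y * (∑ i : D, if f i x = f i y then (1:ℝ) else 0) / (dD * dD)
      ≤ ∑ x, ∑ y, ((if x = y then Q x * P x / dD else 0) + Q x * P y / (cM * dD)) := by
        refine Finset.sum_le_sum fun x _ => Finset.sum_le_sum fun y _ => hbound x y
    _ = (1 / dD) * ∑ x, P x * Q x + (1 / (cM * dD)) * ((∑ j, P j) * (∑ k, Q k)) := by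
        simp_rw [Finset.sum_add_distrib, Finset.sum_ite_eq, Finset.mem_univ, if_true,
          ← Finset.sum_div]
        rw [← Finset.sum_mul_sum]
        have hc : ∑ i : N, Q i * P i = ∑ i : N, P i * Q i :=
          Finset.sum_congr rfl fun i _ => mul_comm _ _
        rw [hc]
        ring
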